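/- Let D be a multidigraph and e an edge of D. Then the link of e in the directed tree complex DT(D) equals the directed tree complex of the multidigraph obtained by deleting all edges with target t(e) and all edges with unordered endpoint pair {s(e),t(e)}, then identifying s(e) with t(e); and the deletion of e in DT(D) equals DT(D − e). -/

import Mathlib

namespace ArXiv

/-! ## Multidigraphs and their directed-forest complexes.
A multidigraph on vertex type `V` with edge type `E` is given by source and
target maps `s t : E → V`. -/

/-- `σ` induces a directed cycle (of some length `n ≥ 1`) in the multidigraph `(s, t)`:
its edges can be arranged cyclically, with pairwise distinct sources, the target of each
edge being the source of the next one. -/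
def IsDirCycle {V E : Type} (s t : E → V) (n : ℕ) (σ : Finset E) : Prop :=
  0 < n ∧ ∃ g : ZMod n → E, Function.Injective g ∧
    (∀ e, e ∈ σ ↔ ∃ i, g i = e) ∧
    Function.Injective (fun i => s (g i)) ∧
    (∀ i, t (g i) = s (g (i + 1)))

/-- No subset of `σ` induces a directed cycle. -/
def NoDirCycleIn {V E : Type} (s t : E → V) (σ : Finset E) : Prop :=
  ∀ (n : ℕ) (τ : Finset E), τ ⊆ σ → ¬ IsDirCycle s t n τ

/-- `σ` induces a vertex-disjoint union of directed paths: all sources are distinct,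
all targets are distinct, and there is no directed cycle inside `σ`. -/
def IsLinearForest {V E : Type} (s t : E → V) (σ : Finset E) : Prop :=
  (∀ e ∈ σ, ∀ f ∈ σ, e ≠ f → s e ≠ s f) ∧
  (∀ e ∈ σ, ∀ f ∈ σ, e ≠ f → t e ≠ t f) ∧
  NoDirCycleIn s t σ

/-- `σ` induces a directed forest: no two distinct edges share a target and there is
no directed cycle inside `σ`. -/
def IsDirForest {V E : Type} (s t : E → V) (σ : Finset E) : Prop :=
  (∀ e ∈ σ, ∀ f ∈ σ, e ≠ f → t e ≠ t f) ∧
  NoDirCycleIn s t σ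

/-- The directed linear forest complex `Dlf(D)`, as its set of faces. -/
def Dlf {V E : Type} (s t : E → V) : Set (Finset E) := {σ | IsLinearForest s t σ}

/-- The directed tree complex `DT(D)`, as its set of faces. -/
def DT {V E : Type} (s t : E → V) : Set (Finset E) := {σ | IsDirForest s t σ}

/-- The edges `e` and `f` have the same unordered pair of endpoints. -/
def SameEnds {V E : Type} (s t : E → V) (e f : E) : Prop :=
  (s e = s f ∧ t e = t f) ∨ (s e = t f ∧ t e = s f)

/-- Adjacency in the linear-forest conflict graph `G^lf_D`. -/
def LFAdj {V E : Type} (s t : E → V) (e f : E) : Prop :=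
  e ≠ f ∧ (s e = s f ∨ t e = t f ∨ SameEnds s t e f)

/-- Adjacency in the tree conflict graph `G^t_D`. -/
def TAdj {V E : Type} (s t : E → V) (e f : E) : Prop :=
  e ≠ f ∧ (t e = t f ∨ SameEnds s t e f)

/-- `σ` is an independent set for the adjacency relation `A`. -/
def IndepIn {E : Type} (A : E → E → Prop) (σ : Finset E) : Prop :=
  ∀ e ∈ σ, ∀ f ∈ σ, ¬ A e f

/-- `D` has no directed cycle of length at least 3 (directed 2-cycles are allowed). -/
def TwoAcyclic {V E : Type} (s t : E → V) : Prop :=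
  ∀ (n : ℕ) (σ : Finset E), 3 ≤ n → ¬ IsDirCycle s t n σ

/-- `D` has no directed cycles at all. -/
def Acyclic {V E : Type} (s t : E → V) : Prop :=
  ∀ (n : ℕ) (σ : Finset E), ¬ IsDirCycle s t n σ

/-- Adjacency in the underlying (simple, undirected) graph of `D`. -/
def UAdj {V E : Type} (s t : E → V) (u v : V) : Prop :=
  u ≠ v ∧ ∃ e, (s e = u ∧ t e = v) ∨ (s e = v ∧ t e = u)

/-- The underlying graph of `D` is a forest: it contains no cycle of length `≥ 3`. -/
def UnderlyingForest {V E : Type} (s t : E → V) : Prop :=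
  ¬ ∃ m : ℕ, 3 ≤ m ∧ ∃ h : ZMod m → V, Function.Injective h ∧
    ∀ i, UAdj s t (h i) (h (i + 1))

/-- An alternating closed trail: a cyclic sequence of distinct edges in which any two
cyclically consecutive edges share a source or share a target. -/
def HasAltClosedTrail {V E : Type} (s t : E → V) : Prop :=
  ∃ k : ℕ, 2 ≤ k ∧ ∃ g : ZMod k → E, Function.Injective g ∧
    ∀ i, s (g i) = s (g (i + 1)) ∨ t (g i) = t (g (i + 1))

/-- `D` has no induced subgraph isomorphic to `L₂`, the double directed string on
three vertices. -/
def IsL2Free {V E : Type} (s t : E → V) : Prop :=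
  ¬ ∃ a b c : V, a ≠ b ∧ b ≠ c ∧ a ≠ c ∧
    ∃ e1 e2 e3 e4 : E,
      e1 ≠ e2 ∧ e1 ≠ e3 ∧ e1 ≠ e4 ∧ e2 ≠ e3 ∧ e2 ≠ e4 ∧ e3 ≠ e4 ∧
      s e1 = a ∧ t e1 = b ∧ s e2 = b ∧ t e2 = a ∧
      s e3 = b ∧ t e3 = c ∧ s e4 = c ∧ t e4 = b ∧
      ∀ f : E, s f ∈ ({a, b, c} : Set V) → t f ∈ ({a, b, c} : Set V) →
        f ∈ ({e1, e2, e3, e4} : Set E)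

/-- The relation `A` (a graph on `β`) has an induced cycle of length at least 4. -/
def HasInducedCycleGE4 {β : Type} (A : β → β → Prop) : Prop :=
  ∃ n : ℕ, 4 ≤ n ∧ ∃ g : ZMod n → β, Function.Injective g ∧
    ∀ i j : ZMod n, i ≠ j → (A (g i) (g j) ↔ j = i + 1 ∨ i = j + 1)

/-! ## Simplicial complexes (as sets of faces). -/

/-- `σ` is a facet (inclusion-maximal face) of `Δ`. -/
def IsFacetOf {α : Type} (Δ : Set (Finset α)) (σ : Finset α) : Prop :=
  σ ∈ Δ ∧ ∀ τ ∈ Δ, σ ⊆ τ → σ = τ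

/-- Deletion of the vertex `v` in `Δ`. -/
def delC {α : Type} (Δ : Set (Finset α)) (v : α) : Set (Finset α) :=
  {τ ∈ Δ | v ∉ τ}

/-- Link of the vertex `v` in `Δ`. -/
def linkC {α : Type} [DecidableEq α] (Δ : Set (Finset α)) (v : α) : Set (Finset α) :=
  {τ | τ ∈ Δ ∧ v ∉ τ ∧ insert v τ ∈ Δ}

/-- `v` is a shedding vertex: every facet of the deletion is a facet of `Δ`. -/
def SheddingVertex {α : Type} (Δ : Set (Finset α)) (v : α) : Prop :=
  ∀ σ, IsFacetOf (delC Δ v) σ → IsFacetOf Δ σ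

/-- Vertex decomposability. -/
inductive VertexDecomposable {α : Type} [DecidableEq α] : Set (Finset α) → Prop
  | void : VertexDecomposable (∅ : Set (Finset α))
  | simplex (σ : Finset α) : VertexDecomposable {τ | τ ⊆ σ}
  | shed (Δ : Set (Finset α)) (v : α) :
      VertexDecomposable (linkC Δ v) → VertexDecomposable (delC Δ v) →
      SheddingVertex Δ v → VertexDecomposable Δ

/-- Shellability (in the non-pure sense of Björner–Wachs). -/
def Shellable {α : Type} (Δ : Set (Finset α)) : Prop :=
  ∃ (m : ℕ) (F : Fin m → Finset α), Function.Injective F ∧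
    (∀ σ, IsFacetOf Δ σ ↔ ∃ i, F i = σ) ∧
    ∀ i : Fin m, 0 < (i : ℕ) → ∀ τ : Finset α, τ ⊆ F i → (∃ j, j < i ∧ τ ⊆ F j) →
      ∃ ρ : Finset α, ρ ⊆ F i ∧ (∃ j, j < i ∧ ρ ⊆ F j) ∧
        ρ.card + 1 = (F i).card ∧ τ ⊆ ρ

/-- The pure `d`-skeleton of `Δ`: the subcomplex generated by the `d`-dimensional faces. -/
def pureSkel {α : Type} (Δ : Set (Finset α)) (d : ℕ) : Set (Finset α) :=
  {τ | ∃ σ ∈ Δ, σ.card = d + 1 ∧ τ ⊆ σ}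

/-- Link of a face `σ` in `Δ`. -/
def linkFaceC {α : Type} [DecidableEq α] (Δ : Set (Finset α)) (σ : Finset α) :
    Set (Finset α) :=
  {τ | τ ∩ σ = ∅ ∧ τ ∪ σ ∈ Δ}

/-- Connectivity of a simplicial complex: any two vertices are joined by an edge path. -/
def ComplexConnected {α : Type} [DecidableEq α] (Δ : Set (Finset α)) : Prop :=
  ∀ u v : α, ({u} : Finset α) ∈ Δ → ({v} : Finset α) ∈ Δ →
    Relation.ReflTransGen (fun a b => ({a, b} : Finset α) ∈ Δ) u v

/-! ## Simplicial homology via ordered chains, and (sequential) Cohen–Macaulayness. -/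

/-- A chain (a function on ordered tuples) is supported on faces of `Δ`. -/
def validChain {α K : Type} [DecidableEq α] [Field K] {k : ℕ}
    (Δ : Set (Finset α)) (c : (Fin k → α) → K) : Prop :=
  ∀ g, c g ≠ 0 → (Finset.univ.image g) ∈ Δ

/-- The simplicial boundary operator on ordered chains. -/
def bdry {α K : Type} [Fintype α] [Field K] {k : ℕ}
    (c : (Fin (k + 2) → α) → K) : (Fin (k + 1) → α) → K :=
  fun g => ∑ j : Fin (k + 2), (-1 : K) ^ (j : ℕ) * ∑ v : α, c (Fin.insertNth j v g)

/-- Vanishing of the `i`-th reduced simplicial homology of `Δ` with coefficients in `K`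
(computed with ordered chains; degree `0` uses the augmentation). -/
def RHomZero (α K : Type) [Fintype α] [DecidableEq α] [Field K]
    (Δ : Set (Finset α)) : ℕ → Prop
  | 0 => ∀ c : (Fin 1 → α) → K, validChain Δ c → (∑ g : Fin 1 → α, c g) = 0 →
      ∃ b : (Fin 2 → α) → K, validChain Δ b ∧ bdry b = c
  | (i + 1) => ∀ c : (Fin (i + 2) → α) → K, validChain Δ c → bdry c = 0 →
      ∃ b : (Fin (i + 3) → α) → K, validChain Δ b ∧ bdry b = c

/-- `Δ` is Cohen–Macaulay over `K`: for every face `σ`, the reduced homology of its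
link vanishes in all degrees strictly below the dimension of the link. -/
def IsCM (α K : Type) [Fintype α] [DecidableEq α] [Field K]
    (Δ : Set (Finset α)) : Prop :=
  ∀ σ ∈ Δ, ∀ i : ℕ, (∃ τ ∈ linkFaceC Δ σ, i + 2 ≤ τ.card) →
    RHomZero α K (linkFaceC Δ σ) i

/-- `Δ` is sequentially Cohen–Macaulay over `K`: every pure skeleton is Cohen–Macaulay. -/
def IsSCM (α K : Type) [Fintype α] [DecidableEq α] [Field K]
    (Δ : Set (Finset α)) : Prop :=
  ∀ d : ℕ, IsCM α K (pureSkel Δ d)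

/-! ## The double directed string `Lₙ` and the double directed cycle `Pₙ`. -/

/-- Source map of `Lₙ`: `inl i` is the edge `i → i+1`, `inr i` the edge `i+1 → i`. -/
def sL (n : ℕ) : Fin n ⊕ Fin n → Fin (n + 1) := Sum.elim Fin.castSucc Fin.succ

/-- Target map of `Lₙ`. -/
def tL (n : ℕ) : Fin n ⊕ Fin n → Fin (n + 1) := Sum.elim Fin.succ Fin.castSucc

/-- Source map of `Pₙ`: `inl i` is the edge `eᵢ : i → i+1`, `inr i` is `eᵢ' : i+1 → i`. -/
def sP (n : ℕ) : ZMod n ⊕ ZMod n → ZMod n := Sum.elim id (fun i => i + 1)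

/-- Target map of `Pₙ`. -/
def tP (n : ℕ) : ZMod n ⊕ ZMod n → ZMod n := Sum.elim (fun i => i + 1) id



/-! ### Auxiliary machinery: closed walks and directed cycles -/

open Relation List

variable {V E : Type}

/-- The one-step walk relation inside `σ`. -/
def WalkRel (s t : E → V) (σ : Finset E) (x y : E) : Prop :=
  x ∈ σ ∧ y ∈ σ ∧ t x = s y

lemma extract_from_list [DecidableEq E] (s t : E → V) (σ : Finset E) :
    ∀ m, ∀ w : List E, w.length ≤ m → ∀ (hne : w ≠ []),
      (∀ x ∈ w, x ∈ σ) → w.Chain' (fun x y => t x = s y) →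
      t (w.getLast hne) = s (w.head hne) →
      ∃ n τ, τ ⊆ σ ∧ IsDirCycle s t n τ := by
  intro m
  induction m with
  | zero =>
    intro w hw hne
    interval_cases h : w.length
    · exact absurd (List.length_eq_zero_iff.mp h) hne
  | succ m ih =>
    intro w hw hne hmem hchain hwrap
    have hlen : 0 < w.length := List.length_pos_iff.mpr hne
    by_cases hinj : ∀ i j : ℕ, ∀ (hi : i < w.length) (hj : j < w.length),
        s (w[i]'hi) = s (w[j]'hj) → i = j
    · -- sources distinct: build the cycle
      haveI : NeZero w.length := ⟨by omega⟩
      refine ⟨w.length,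
        Finset.image (fun i : ZMod w.length => w[i.val]'(ZMod.val_lt i)) Finset.univ, ?_, ?_⟩
      · intro x hx
        obtain ⟨i, -, rfl⟩ := Finset.mem_image.mp hx
        exact hmem _ (List.getElem_mem _)
      · refine ⟨hlen, fun i : ZMod w.length => w[i.val]'(ZMod.val_lt i), ?_, ?_, ?_, ?_⟩
        · intro i j hij
          exact ZMod.val_injective _
            (hinj _ _ (ZMod.val_lt i) (ZMod.val_lt j) (congrArg s hij))
        · intro x
          simp [Finset.mem_image]
        · intro i j hij
          exact ZMod.val_injective _ (hinj _ _ (ZMod.val_lt i) (ZMod.val_lt j) hij)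
        · intro i
          have hvlt := ZMod.val_lt i
          have hadd : (i + 1).val = (i.val + 1) % w.length := by
            rw [ZMod.val_add, ZMod.val_one_eq_one_mod]
            conv_rhs => rw [Nat.add_mod]
            rw [Nat.mod_eq_of_lt hvlt]
          rcases Nat.lt_or_ge (i.val + 1) w.length with hlt | hge
          · have h1 : (i + 1).val = i.val + 1 := by rw [hadd, Nat.mod_eq_of_lt hlt]
            have hc := List.isChain_iff_getElem.mp hchain i.val (by omega)
            simp only [h1]
            exact hc
          · have h1 : (i + 1).val = 0 := by
              rw [hadd, show i.val + 1 = w.length by omega, Nat.mod_self]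
            simp only [h1]
            have hl : w.getLast hne = w[w.length - 1]'(by omega) :=
              List.getLast_eq_getElem hne
            have hh : w.head hne = w[0]'(by omega) := List.head_eq_getElem_zero hne
            rw [hl, hh] at hwrap
            have : i.val = w.length - 1 := by omega
            simp only [this]
            exact hwrap
    · -- repeated source: shorten the walk
      push_neg at hinj
      have key : ∀ i j (hi : i < w.length) (hj : j < w.length), i < j →
          s (w[i]'hi) = s (w[j]'hj) → ∃ n τ, τ ⊆ σ ∧ IsDirCycle s t n τ := by
        intro i j hi hj hlt hss
        set w' := (w.drop i).take (j - i) with hw'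
        have hlen' : w'.length = j - i := by
          simp only [hw', List.length_take, List.length_drop]
          omega
        have hne' : w' ≠ [] := by
          apply List.ne_nil_of_length_pos
          omega
        have hget : ∀ k (hk : k < w'.length), w'[k]'hk = w[i + k]'(by omega) := by
          intro k hk
          simp only [hw', List.getElem_take, List.getElem_drop]
        apply ih w' (by omega) hne'
        · intro x hx
          exact hmem x (List.mem_of_mem_drop (List.mem_of_mem_take hx))
        · exact (hchain.drop i).take _
        · have h1 : w'.getLast hne' = w'[w'.length - 1]'(by omega) :=
            List.getLast_eq_getElem hne'
          have h2 : w'.head hne' = w'[0]'(by omega) := List.head_eq_getElem_zero hne'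
          rw [h1, h2, hget, hget]
          have e1 : i + (w'.length - 1) = j - 1 := by omega
          simp only [e1, Nat.add_zero]
          have hc := List.isChain_iff_getElem.mp hchain (j - 1) (by omega)
          have hj1 : j - 1 + 1 = j := by omega
          simp only [hj1] at hc
          exact hc.trans hss.symm
      obtain ⟨i, j, hi, hj, hss, hij⟩ := hinj
      rcases Nat.lt_or_ge i j with h | h
      · exact key i j hi hj h hss
      · exact key j i hj hi (by omega) hss.symm

lemma cycle_of_walk [DecidableEq E] {s t : E → V} {σ : Finset E} {a : E}
    (h : TransGen (WalkRel s t σ) a a) :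
    ∃ n τ, τ ⊆ σ ∧ IsDirCycle s t n τ := by
  obtain ⟨b, hab, hba⟩ := TransGen.tail'_iff.mp h
  obtain ⟨l, hl1, hl2⟩ := List.exists_isChain_cons_of_relationReflTransGen hab
  have hmem' : ∀ (c : E) (l' : List E), List.Chain (WalkRel s t σ) c l' → ∀ x ∈ l', x ∈ σ := by
    intro c l' hch
    induction l' generalizing c with
    | nil => simp
    | cons y l'' ih =>
      intro x hx
      have hch' : List.IsChain (WalkRel s t σ) (c :: y :: l'') := hch
      rcases List.mem_cons.mp hx with rfl | hx
      · exact (List.isChain_cons_cons.mp hch').1.2.1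
      · exact ih y (List.isChain_cons_cons.mp hch').2 x hx
  have hmem : ∀ x ∈ a :: l, x ∈ σ := by
    intro x hx
    rcases List.mem_cons.mp hx with rfl | hx
    · exact hba.2.1
    · exact hmem' a l hl1 x hx
  have hchain : (a :: l).Chain' (fun x y => t x = s y) :=
    hl1.imp (fun _ _ h => h.2.2)
  refine extract_from_list s t σ (a :: l).length (a :: l) le_rfl (List.cons_ne_nil a l)
    hmem hchain ?_
  rw [hl2, List.head_cons]
  exact hba.2.2

lemma walk_of_cycle {s t : E → V} {σ τ : Finset E} (hsub : τ ⊆ σ) {n : ℕ}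
    (h : IsDirCycle s t n τ) : ∃ a, TransGen (WalkRel s t σ) a a := by
  obtain ⟨hn, g, hginj, hgmem, hsinj, hstep⟩ := h
  have hgm : ∀ i, g i ∈ σ := fun i => hsub ((hgmem (g i)).mpr ⟨i, rfl⟩)
  have key : ∀ k : ℕ, TransGen (WalkRel s t σ) (g 0) (g ((k + 1 : ℕ) : ZMod n)) := by
    intro k
    induction k with
    | zero => exact TransGen.single ⟨hgm 0, hgm _, by simpa using hstep 0⟩
    | succ k ih =>
      refine ih.tail ⟨hgm _, hgm _, ?_⟩
      have := hstep ((k + 1 : ℕ) : ZMod n)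
      rwa [show (((k + 1 : ℕ) : ZMod n) + 1) = ((k + 1 + 1 : ℕ) : ZMod n) by push_cast; ring]
        at this
  have := key (n - 1)
  rw [show n - 1 + 1 = n by omega, ZMod.natCast_self] at this
  exact ⟨g 0, this⟩

lemma noDir_iff [DecidableEq E] (s t : E → V) (σ : Finset E) :
    NoDirCycleIn s t σ ↔ ∀ a, ¬ TransGen (WalkRel s t σ) a a := by
  constructor
  · intro h a ha
    obtain ⟨n, τ, hsub, hc⟩ := cycle_of_walk ha
    exact h n τ hsub hc
  · intro h n τ hsub hc
    obtain ⟨a, ha⟩ := walk_of_cycle hsub hc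
    exact h a ha
lemma mem_DT [DecidableEq E] {s t : E → V} {σ : Finset E} :
    σ ∈ DT s t ↔ (∀ e ∈ σ, ∀ f ∈ σ, e ≠ f → t e ≠ t f) ∧
      ∀ a, ¬ TransGen (WalkRel s t σ) a a := by
  show IsDirForest s t σ ↔ _
  unfold IsDirForest
  rw [noDir_iff]

lemma DT_mono {s t : E → V} {σ τ : Finset E} (hsub : τ ⊆ σ) (h : σ ∈ DT s t) :
    τ ∈ DT s t := by
  obtain ⟨h1, h2⟩ := h
  exact ⟨fun x hx y hy => h1 x (hsub hx) y (hsub hy),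
    fun n ρ hρ => h2 n ρ (hρ.trans hsub)⟩

lemma transGen_subtype {p : E → Prop} [DecidableEq E] (s t : E → V)
    (τ' : Finset {f : E // p f}) :
    (∃ a, TransGen (WalkRel (fun f : {f : E // p f} => s f.val)
        (fun f => t f.val) τ') a a) ↔
    (∃ b, TransGen (WalkRel s t (τ'.image Subtype.val)) b b) := by
  constructor
  · rintro ⟨a, ha⟩
    refine ⟨a.val, TransGen.lift Subtype.val ?_ _ _ ha⟩
    rintro x y ⟨hx, hy, hxy⟩
    exact ⟨Finset.mem_image_of_mem _ hx, Finset.mem_image_of_mem _ hy, hxy⟩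
  · rintro ⟨b, hb⟩
    have hstart : b ∈ τ'.image Subtype.val := by
      obtain ⟨c, hbc, -⟩ := TransGen.head'_iff.mp hb
      exact hbc.1
    obtain ⟨b', hb', hbv⟩ := Finset.mem_image.mp hstart
    suffices h : ∀ (x : E), TransGen (WalkRel s t (τ'.image Subtype.val)) b x →
        ∀ x' ∈ τ', x'.val = x →
        TransGen (WalkRel (fun f : {f : E // p f} => s f.val) (fun f => t f.val) τ') b' x' by
      exact ⟨b', h b hb b' hb' hbv⟩
    intro x hx
    induction hx with
    | single hr =>
      intro x' hx' hxv
      obtain ⟨c', hc', hcv⟩ := Finset.mem_image.mp hr.2.1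
      have : x' = c' := Subtype.ext (hxv.trans hcv.symm)
      subst this
      exact TransGen.single ⟨hb', hc', by show t b'.val = s x'.val; rw [hbv, hxv]; exact hr.2.2⟩
    | tail h1 hr ih =>
      intro x' hx' hxv
      obtain ⟨c', hc', hcv⟩ := Finset.mem_image.mp hr.1
      have step : WalkRel (fun f : {f : E // p f} => s f.val) (fun f => t f.val) τ' c' x' :=
        ⟨hc', hx', by show t c'.val = s x'.val; rw [hcv, hxv]; exact hr.2.2⟩
      exact (ih c' hc' hcv).tail step
  
lemma DT_subtype {p : E → Prop} [DecidableEq E] (s t : E → V) (τ' : Finset {f : E // p f}) :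
    τ' ∈ DT (fun f => s f.val) (fun f => t f.val) ↔ τ'.image Subtype.val ∈ DT s t := by
  rw [mem_DT, mem_DT]
  constructor
  · rintro ⟨h1, h2⟩
    constructor
    · intro x hx y hy hxy
      obtain ⟨x', hx', rfl⟩ := Finset.mem_image.mp hx
      obtain ⟨y', hy', rfl⟩ := Finset.mem_image.mp hy
      exact h1 x' hx' y' hy' (fun hh => hxy (congrArg Subtype.val hh))
    · intro b hb
      obtain ⟨a, ha⟩ := (transGen_subtype s t τ').mpr ⟨b, hb⟩
      exact h2 a ha
  · rintro ⟨h1, h2⟩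
    constructor
    · intro x hx y hy hxy
      exact h1 x.val (Finset.mem_image_of_mem _ hx) y.val (Finset.mem_image_of_mem _ hy)
        (fun hh => hxy (Subtype.ext hh))
    · intro a ha
      obtain ⟨b, hb⟩ := (transGen_subtype s t τ').mp ⟨a, ha⟩
      exact h2 b hb
/-- source map of the contraction of `e` -/
def cS (s t : E → V) [DecidableEq V] (e : E) : E → V :=
  fun f => if s f = t e then s e else s f

/-- target map of the contraction of `e` -/
def cT (s t : E → V) [DecidableEq V] (e : E) : E → V :=
  fun f => if t f = t e then s e else t f

lemma link_core [DecidableEq V] [DecidableEq E] (s t : E → V) (e : E)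
    (hets : s e ≠ t e) (τ : Finset E) (hP : ∀ f ∈ τ, t f ≠ t e) (henotin : e ∉ τ) :
    insert e τ ∈ DT s t ↔ τ ∈ DT (cS s t e) (cT s t e) := by
  have hcT : ∀ f ∈ τ, cT s t e f = t f := fun f hf => if_neg (hP f hf)
  rw [mem_DT, mem_DT]
  constructor
  · rintro ⟨h1, h2⟩
    constructor
    · -- targets distinct in contraction
      intro x hx y hy hxy
      rw [hcT x hx, hcT y hy]
      exact h1 x (Finset.mem_insert_of_mem hx) y (Finset.mem_insert_of_mem hy) hxy
    · -- no closed walk in contraction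
      intro a ha
      have step : ∀ x y, WalkRel (cS s t e) (cT s t e) τ x y →
          TransGen (WalkRel s t (insert e τ)) x y := by
        rintro x y ⟨hx, hy, hxy⟩
        rw [hcT x hx] at hxy
        by_cases hsy : s y = t e
        · -- go through e
          have h1' : t x = s e := by rwa [cS, if_pos hsy] at hxy
          exact (TransGen.single ⟨Finset.mem_insert_of_mem hx, Finset.mem_insert_self e τ,
            h1'⟩).tail ⟨Finset.mem_insert_self e τ, Finset.mem_insert_of_mem hy, hsy.symm⟩
        · have h1' : t x = s y := by rwa [cS, if_neg hsy] at hxy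
          exact TransGen.single ⟨Finset.mem_insert_of_mem hx, Finset.mem_insert_of_mem hy, h1'⟩
      have lift : ∀ x y, TransGen (WalkRel (cS s t e) (cT s t e) τ) x y →
          TransGen (WalkRel s t (insert e τ)) x y := by
        intro x y h
        induction h with
        | single hr => exact step _ _ hr
        | tail _ hr ih => exact ih.trans (step _ _ hr)
      exact h2 a (lift a a ha)
  · rintro ⟨h1, h2⟩
    have hstep : ∀ x y, x ∈ τ → y ∈ τ → t x = s y → WalkRel (cS s t e) (cT s t e) τ x y := by
      intro x y hx hy hxy
      refine ⟨hx, hy, ?_⟩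
      rw [hcT x hx]
      by_cases hsy : s y = t e
      · exact absurd (hxy.trans hsy) (hP x hx)
      · rw [cS, if_neg hsy]; exact hxy
    have habs : ∀ x y, x ∈ τ → t x = s e → y ∈ τ → t e = s y →
        WalkRel (cS s t e) (cT s t e) τ x y := by
      intro x y hx hxe hy hey
      refine ⟨hx, hy, ?_⟩
      rw [hcT x hx, cS, if_pos hey.symm]
      exact hxe
    constructor
    · -- targets distinct in insert e τ
      intro x hx y hy hxy
      rcases Finset.mem_insert.mp hx with hxe | hx
      · rcases Finset.mem_insert.mp hy with hye | hy
        · exact absurd (hxe.trans hye.symm) hxy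
        · rw [hxe]; exact fun hh => hP y hy hh.symm
      · rcases Finset.mem_insert.mp hy with hye | hy
        · rw [hye]; exact hP x hx
        · rw [← hcT x hx, ← hcT y hy]; exact h1 x hx y hy hxy
    · -- no closed walk in insert e τ
      intro a0 ha0
      have main : ∀ a b, a ∈ τ → TransGen (WalkRel s t (insert e τ)) a b →
          (b ∈ τ → TransGen (WalkRel (cS s t e) (cT s t e) τ) a b) ∧
          (b = e → ∃ d ∈ τ, ReflTransGen (WalkRel (cS s t e) (cT s t e) τ) a d ∧ t d = s e) := by
        intro a b ha h
        induction h with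
        | @single b hab =>
          rcases Finset.mem_insert.mp hab.2.1 with hbe | hb
          · exact ⟨fun hbτ => absurd (hbe ▸ hbτ) henotin,
              fun _ => ⟨a, ha, ReflTransGen.refl, by rw [← hbe]; exact hab.2.2⟩⟩
          · refine ⟨fun _ => TransGen.single (hstep a b ha hb hab.2.2), ?_⟩
            intro hbe
            exact absurd (hbe ▸ hb) henotin
        | @tail c b h1' hcb ih =>
          rcases Finset.mem_insert.mp hcb.1 with hce | hc
          · -- intermediate vertex is e
            obtain ⟨d, hd, hrd, htd⟩ := ih.2 hce
            rcases Finset.mem_insert.mp hcb.2.1 with hbe | hb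
            · -- step e → e impossible
              exfalso
              apply hets
              have h3 := hcb.2.2
              rw [hce, hbe] at h3
              exact h3.symm
            · refine ⟨fun _ => ?_, fun hbe => absurd (hbe ▸ hb) henotin⟩
              have hst : WalkRel (cS s t e) (cT s t e) τ d b :=
                habs d b hd htd hb (by rw [← hce]; exact hcb.2.2)
              exact TransGen.tail' hrd hst
          · have hac := ih.1 hc
            rcases Finset.mem_insert.mp hcb.2.1 with hbe | hb
            · exact ⟨fun hbτ => absurd (hbe ▸ hbτ) henotin,
                fun _ => ⟨c, hc, hac.to_reflTransGen, by rw [← hbe]; exact hcb.2.2⟩⟩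
            · exact ⟨fun _ => hac.tail (hstep c b hc hb hcb.2.2),
                fun hbe => absurd (hbe ▸ hb) henotin⟩
      obtain ⟨c, hec, hce⟩ := TransGen.head'_iff.mp ha0
      rcases Finset.mem_insert.mp hec.1 with ha0e | ha0τ
      · -- a0 = e
        have hcτ : c ∈ τ := by
          rcases Finset.mem_insert.mp hec.2.1 with hc | hc
          · refine absurd ?_ hets
            have h3 := hec.2.2
            rw [ha0e, hc] at h3
            exact h3.symm
          · exact hc
        have hcc : TransGen (WalkRel s t (insert e τ)) c c := TransGen.tail' hce hec
        exact h2 c ((main c c hcτ hcc).1 hcτ)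
      · exact h2 a0 ((main a0 a0 ha0τ ha0).1 ha0τ)

/-- The link of an edge `e` (a vertex of `DT(D)`) in the directed tree
complex equals the directed tree complex of the multidigraph obtained by deleting all
edges with target `t e` and all edges with unordered endpoint pair `{s e, t e}` and then
identifying `s e` with `t e`; and the deletion of `e` in `DT(D)` equals `DT(D − e)`. -/
theorem statement_4 {V E : Type} [DecidableEq V] [DecidableEq E]
    (s t : E → V) (e : E) (he : ({e} : Finset E) ∈ DT s t) :
    linkC (DT s t) e =
      {τ : Finset E |
        ∃ τ' : Finset {f : E // t f ≠ t e ∧ ¬ SameEnds s t f e},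
          τ = τ'.image Subtype.val ∧
          τ' ∈ DT (fun f => if s f.val = t e then s e else s f.val)
                  (fun f => if t f.val = t e then s e else t f.val)} ∧
    delC (DT s t) e =
      {τ : Finset E | ∃ τ' : Finset {f : E // f ≠ e},
        τ = τ'.image Subtype.val ∧
        τ' ∈ DT (fun f => s f.val) (fun f => t f.val)} := by
  classical
  have hets : s e ≠ t e := by
    intro hst
    exact (mem_DT.mp he).2 e (TransGen.single
      ⟨Finset.mem_singleton_self e, Finset.mem_singleton_self e, hst.symm⟩)
  constructor
  · -- the link part
    ext τ
    simp only [linkC, Set.mem_setOf_eq]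
    constructor
    · rintro ⟨h1, h2, h3⟩
      have h3' := mem_DT.mp h3
      have hPt : ∀ f ∈ τ, t f ≠ t e := by
        intro f hf
        exact h3'.1 f (Finset.mem_insert_of_mem hf) e (Finset.mem_insert_self e τ)
          (fun hh => h2 (hh ▸ hf))
      have hPs : ∀ f ∈ τ, ¬ SameEnds s t f e := by
        intro f hf hse
        rcases hse with ⟨hs, ht⟩ | ⟨hs, ht⟩
        · exact hPt f hf ht
        · exact h3'.2 e ((TransGen.single
            ⟨Finset.mem_insert_self e τ, Finset.mem_insert_of_mem hf, hs.symm⟩).tail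
            ⟨Finset.mem_insert_of_mem hf, Finset.mem_insert_self e τ, ht⟩)
      have himg : (τ.subtype (fun f => t f ≠ t e ∧ ¬ SameEnds s t f e)).image
          Subtype.val = τ := by
        ext x
        simp only [Finset.mem_image, Finset.mem_subtype, Subtype.exists]
        constructor
        · rintro ⟨a, ha, hmem, rfl⟩
          exact hmem
        · intro hx
          exact ⟨x, ⟨hPt x hx, hPs x hx⟩, hx, rfl⟩
      refine ⟨τ.subtype (fun f => t f ≠ t e ∧ ¬ SameEnds s t f e), himg.symm, ?_⟩
      refine (DT_subtype (cS s t e) (cT s t e) _).mpr ?_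
      rw [himg]
      exact (link_core s t e hets τ hPt h2).mp h3
    · rintro ⟨τ', rfl, hτ'⟩
      have h' : τ'.image Subtype.val ∈ DT (cS s t e) (cT s t e) :=
        (DT_subtype (cS s t e) (cT s t e) τ').mp hτ'
      have hPt : ∀ f ∈ τ'.image Subtype.val, t f ≠ t e := by
        intro f hf
        obtain ⟨f', -, rfl⟩ := Finset.mem_image.mp hf
        exact f'.2.1
      have henotin : e ∉ τ'.image Subtype.val := fun hc => (hPt e hc) rfl
      have hins : insert e (τ'.image Subtype.val) ∈ DT s t :=
        (link_core s t e hets _ hPt henotin).mpr h'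
      exact ⟨DT_mono (Finset.subset_insert e _) hins, henotin, hins⟩
  · -- the deletion part
    ext τ
    simp only [delC, Set.mem_setOf_eq]
    constructor
    · rintro ⟨h1, h2⟩
      have himg : (τ.subtype (· ≠ e)).image Subtype.val = τ := by
        ext x
        simp only [Finset.mem_image, Finset.mem_subtype, Subtype.exists]
        constructor
        · rintro ⟨a, ha, hmem, rfl⟩
          exact hmem
        · intro hx
          exact ⟨x, fun hxe => h2 (hxe ▸ hx), hx, rfl⟩
      refine ⟨τ.subtype (· ≠ e), himg.symm, ?_⟩
      refine (DT_subtype s t _).mpr ?_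
      rw [himg]
      exact h1
    · rintro ⟨τ', rfl, hτ'⟩
      refine ⟨(DT_subtype s t τ').mp hτ', ?_⟩
      intro hc
      obtain ⟨f', -, hf⟩ := Finset.mem_image.mp hc
      exact f'.2 hf


end ArXiv
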